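/- (Generalized Carnevale–Hines Lemma.) For all real numbers λ, μ₁, μ₂ with μ₂ > μ₁, μ₁ ≠ λ and μ₂ ≠ λ, and for every real t, one has (exp(−λt) − exp(−μ₁t))/(μ₁ − λ) ≥ (exp(−λt) − exp(−μ₂t))/(μ₂ − λ). -/

import Mathlib

open Real

lemma int_exp_eq (s t : ℝ) (hs : s ≠ 0) :
    ∫ u in (0:ℝ)..t, Real.exp (-s * u) = (1 - Real.exp (-s * t)) / s := by
  have hderiv : ∀ u ∈ Set.uIcc (0:ℝ) t,
      HasDerivAt (fun u => -Real.exp (-s * u) / s) (Real.exp (-s * u)) u := by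
    intro u _
    have h1 : HasDerivAt (fun u : ℝ => -s * u) (-s) u := by
      simpa using (hasDerivAt_id u).const_mul (-s)
    have h2 := (h1.exp).neg.div_const s
    exact h2.congr_deriv (by field_simp)
  have hint : IntervalIntegrable (fun u => Real.exp (-s * u)) MeasureTheory.volume 0 t :=
    (Real.continuous_exp.comp (continuous_const.mul continuous_id)).intervalIntegrable 0 t
  rw [intervalIntegral.integral_eq_sub_of_hasDerivAt hderiv hint]
  field_simp
  simp only [mul_zero, neg_zero, Real.exp_zero]
  ring

lemma int_mono (s₁ s₂ t : ℝ) (hs : s₁ ≤ s₂) :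
    ∫ u in (0:ℝ)..t, Real.exp (-s₂ * u) ≤ ∫ u in (0:ℝ)..t, Real.exp (-s₁ * u) := by
  have hint : ∀ s a b : ℝ, IntervalIntegrable (fun u => Real.exp (-s * u)) MeasureTheory.volume a b :=
    fun s a b => (Real.continuous_exp.comp (continuous_const.mul continuous_id)).intervalIntegrable a b
  rcases le_or_gt 0 t with ht | ht
  · apply intervalIntegral.integral_mono_on ht (hint _ _ _) (hint _ _ _)
    intro u hu
    exact Real.exp_le_exp.2 (by nlinarith [hu.1])
  · rw [intervalIntegral.integral_symm t 0, intervalIntegral.integral_symm t 0]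
    apply neg_le_neg
    apply intervalIntegral.integral_mono_on ht.le (hint _ _ _) (hint _ _ _)
    intro u hu
    exact Real.exp_le_exp.2 (by nlinarith [hu.2])

/-- Generalized Carnevale–Hines Lemma: If `μ₂ > μ₁`, `μ₁ ≠ λ` and
`μ₂ ≠ λ`, then for every real `t`,
`(exp (-λ*t) - exp (-μ₁*t))/(μ₁ - λ) ≥ (exp (-λ*t) - exp (-μ₂*t))/(μ₂ - λ)`. -/
theorem stmt_5 (l μ₁ μ₂ : ℝ) (h : μ₁ < μ₂) (h1 : μ₁ ≠ l) (h2 : μ₂ ≠ l) (t : ℝ) :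
    (Real.exp (-l * t) - Real.exp (-μ₁ * t)) / (μ₁ - l) ≥
      (Real.exp (-l * t) - Real.exp (-μ₂ * t)) / (μ₂ - l) := by
  have hs1 : μ₁ - l ≠ 0 := sub_ne_zero.2 h1
  have hs2 : μ₂ - l ≠ 0 := sub_ne_zero.2 h2
  have key : (1 - Real.exp (-(μ₂ - l) * t)) / (μ₂ - l) ≤
      (1 - Real.exp (-(μ₁ - l) * t)) / (μ₁ - l) := by
    rw [← int_exp_eq _ _ hs1, ← int_exp_eq _ _ hs2]
    exact int_mono _ _ _ (by linarith)
  have hpos : 0 < Real.exp (-l * t) := Real.exp_pos _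
  have e1 : (Real.exp (-l * t) - Real.exp (-μ₁ * t)) / (μ₁ - l)
      = Real.exp (-l * t) * ((1 - Real.exp (-(μ₁ - l) * t)) / (μ₁ - l)) := by
    rw [mul_div_assoc', mul_sub, mul_one, ← Real.exp_add]
    ring_nf
  have e2 : (Real.exp (-l * t) - Real.exp (-μ₂ * t)) / (μ₂ - l)
      = Real.exp (-l * t) * ((1 - Real.exp (-(μ₂ - l) * t)) / (μ₂ - l)) := by
    rw [mul_div_assoc', mul_sub, mul_one, ← Real.exp_add]
    ring_nf
  rw [e1, e2]
  exact mul_le_mul_of_nonneg_left key hpos.le
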